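/- Let k and l be positive integers, p₁ ∈ P_k and p₂ ∈ P_l. For any p' ∈ P_{k+l} with p' ≤ p₁⊗p₂ (geodesic order with base id_{k+l}), there exist p'₁ ∈ P_k with p'₁ ≤ p₁ and p'₂ ∈ P_l with p'₂ ≤ p₂ such that p' = p'₁ ⊗ p'₂. -/

import Mathlib

open Sum
open scoped Classical

noncomputable section

namespace PartitionPaper

variable {X : Type*}

/-- The number of blocks of a partition of `X`, encoded as a setoid on `X`. -/
def nc (p : Setoid X) : ℕ := Nat.card (Quotient p)

/-- The geodesic distance `d(p,p') = (nc p + nc p')/2 - nc (p ⊔ p')`. -/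
def pdist (p q : Setoid X) : ℚ :=
  ((nc p : ℚ) + (nc q : ℚ)) / 2 - (nc (p ⊔ q) : ℚ)

/-- Geodesic order with base partition `b` : `p' ≤_b p`. -/
def geoLE (b p' p : Setoid X) : Prop := pdist b p' + pdist p' p = pdist b p

/-- Coarser-compatible order `p' ⊣_b p` : `p'` coarser than `p` and
`nc (p' ⊔ b) = nc (p ⊔ b)`.  (In the setoid lattice, `p ≤ p'` means `p` is finer.) -/
def coarserComp (b p' p : Setoid X) : Prop :=
  p ≤ p' ∧ nc (p' ⊔ b) = nc (p ⊔ b)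

/-- Finer-compatible order `p' ⊐_b p` : `p'` finer than `p` and
`nc p' - nc (p' ⊔ b) = nc p - nc (p ⊔ b)`. -/
def finerComp (b p' p : Setoid X) : Prop :=
  p' ≤ p ∧ (nc p' : ℤ) - (nc (p' ⊔ b) : ℤ) = (nc p : ℤ) - (nc (p ⊔ b) : ℤ)

/-- `p'` is obtained from `p` by gluing two blocks of `p` into one. -/
def IsGluing (p p' : Setoid X) : Prop := p ≤ p' ∧ nc p' + 1 = nc p

/-- The Cayley graph on partitions of `X`: an edge iff one partition is obtained
from the other by gluing two of its blocks into one. -/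
def glueGraph (X : Type*) : SimpleGraph (Setoid X) where
  Adj p q := IsGluing p q ∨ IsGluing q p
  symm := ⟨fun _ _ h => h.elim Or.inr Or.inl⟩
  loopless := by
    constructor
    intro p h
    rcases h with ⟨-, h⟩ | ⟨-, h⟩ <;> omega

/-- The segment `[p₁, p₂]` for the geodesic distance. -/
def seg (p₁ p₂ : Setoid X) : Set (Setoid X) :=
  {p | pdist p₁ p + pdist p p₂ = pdist p₁ p₂}

/-- The defect of `p'` from being on `[b, p]`. -/
def df (b p' p : Setoid X) : ℚ := pdist b p' + pdist p' p - pdist b p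

/-- Admissible one-step splits: `p'` is obtained by cutting a (pivotal) block of `p`
into two blocks in such a way that the join with `b` gains one block. -/
def Delta (b p : Setoid X) : Set (Setoid X) :=
  {p' | p' ≤ p ∧ nc p' = nc p + 1 ∧ nc (p' ⊔ b) = nc (p ⊔ b) + 1}

/-- The admissible splits `Sp_b(p) = ⋃ₘ Δ_b^m(p)`. -/
def Sp (b p : Setoid X) : Set (Setoid X) :=
  {p' | Relation.ReflTransGen (fun u v => v ∈ Delta b u) p p'}

/-- The admissible gluings `Gl_b(p)`: partitions obtained by gluing blocks of `p`
without altering the number of blocks of the join with `b`. -/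
def Gl (b p : Setoid X) : Set (Setoid X) :=
  {p' | p ≤ p' ∧ nc (p' ⊔ b) = nc (p ⊔ b)}

/-- `p'` is directly smaller than `p` for the relation `r`. -/
def DirectlySmaller (r : Setoid X → Setoid X → Prop) (p' p : Setoid X) : Prop :=
  r p' p ∧ p' ≠ p ∧ ¬ ∃ p'', p'' ≠ p ∧ p'' ≠ p' ∧ r p' p'' ∧ r p'' p

/-- The block of the partition `p` corresponding to a class `c`. -/
def blockSet (p : Setoid X) (c : Quotient p) : Set X := {x | Quotient.mk p x = c}

/-- The number of blocks of `q` contained in the block `c` of `p`. -/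
def numSubBlocks (q p : Setoid X) (c : Quotient p) : ℕ :=
  Nat.card {d : Quotient q // blockSet q d ⊆ blockSet p c}

/-- The number of blocks of `p` containing exactly `i` blocks of `q`. -/
def rcount (q p : Setoid X) (i : ℕ) : ℕ :=
  Nat.card {c : Quotient p // numSubBlocks q p c = i}

/-- The Möbius function of the refinement order:
`μ_f(q,p) = (-1)^(nc q - nc p) ∏_i ((i-1)!)^(r_i)` for `q` finer than `p`. -/
def muf (q p : Setoid X) : ℤ :=
  (-1) ^ (nc q - nc p) *
    ∏ i ∈ Finset.range (nc q + 1), ((Nat.factorial (i - 1) : ℤ)) ^ (rcount q p i)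

/-- `P_k`: partitions of `{1,…,k} ∪ {1',…,k'}`, the left summand being the
unprimed (top) row and the right summand the primed (bottom) row. -/
abbrev Pk (k : ℕ) := Setoid (Fin k ⊕ Fin k)

/-- The identity partition `id_k = {{i, i'} : 1 ≤ i ≤ k}`. -/
def idk (k : ℕ) : Pk k := Setoid.ker (Sum.elim id id)

/-- The permutation partition associated with `σ`, with blocks `{i, σ(i)'}`. -/
def permPartition {k : ℕ} (σ : Equiv.Perm (Fin k)) : Pk k :=
  Setoid.ker (Sum.elim id σ.symm)

/-- `S_k`, the set of permutation partitions. -/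
def Sk (k : ℕ) : Set (Pk k) := Set.range (permPartition (k := k))

/-- `B_k`, the set of Brauer partitions: all blocks have exactly two elements. -/
def Bk (k : ℕ) : Set (Pk k) := {p | ∀ x, Nat.card {y | p.r x y} = 2}

/-- Embedding of the top/bottom rows of the upper diagram `q` into the
three-row diagram (top ⊕ (middle ⊕ bottom)). -/
def upMap (k : ℕ) : Fin k ⊕ Fin k → Fin k ⊕ (Fin k ⊕ Fin k) :=
  Sum.elim Sum.inl (fun i => Sum.inr (Sum.inl i))

/-- Embedding of the top/bottom rows of the lower diagram `p` into the
three-row diagram. -/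
def downMap (k : ℕ) : Fin k ⊕ Fin k → Fin k ⊕ (Fin k ⊕ Fin k) :=
  Sum.elim (fun i => Sum.inr (Sum.inl i)) (fun i => Sum.inr (Sum.inr i))

/-- The partition of the three-row diagram obtained by stacking a diagram of `q`
on top of a diagram of `p` (identifying the bottom row of `q` with the top row
of `p`): the equivalence relation generated by the copies of `q` and `p`. -/
def stackSetoid {k : ℕ} (p q : Pk k) : Setoid (Fin k ⊕ (Fin k ⊕ Fin k)) :=
  sInf {s | ∀ x y,
    ((∃ a b, upMap k a = x ∧ upMap k b = y ∧ q.r a b) ∨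
     (∃ a b, downMap k a = x ∧ downMap k b = y ∧ p.r a b)) → s.r x y}

/-- The composition `p ∘ q` (a diagram of `q` stacked above a diagram of `p`),
obtained by restricting the stacked partition to the outer rows. -/
def comp {k : ℕ} (p q : Pk k) : Pk k :=
  Setoid.comap (Sum.elim Sum.inl (fun i => Sum.inr (Sum.inr i))) (stackSetoid p q)

/-- `κ(p,q)`: the number of connected components of the stacked diagram entirely
contained in the middle row. -/
def kappaP {k : ℕ} (p q : Pk k) : ℕ :=
  Nat.card {c : Quotient (stackSetoid p q) //
    ∀ x, Quotient.mk (stackSetoid p q) x = c → ∃ i : Fin k, x = Sum.inr (Sum.inl i)}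

/-- The transpose `ᵗp`, exchanging the two rows. -/
def transpose {k : ℕ} (p : Pk k) : Pk k := Setoid.comap Sum.swap p

/-- The disjoint-union partition on a sum type. -/
def sumSetoid {α β : Type*} (p : Setoid α) (q : Setoid β) : Setoid (α ⊕ β) :=
  Setoid.ker (Sum.map (Quotient.mk p) (Quotient.mk q))

/-- Reindexing of the rows for the tensor product. -/
def reindex (k l : ℕ) :
    Fin (k + l) ⊕ Fin (k + l) → (Fin k ⊕ Fin k) ⊕ (Fin l ⊕ Fin l) :=
  Sum.elim
    (fun j => Sum.elim (fun a => Sum.inl (Sum.inl a)) (fun b => Sum.inr (Sum.inl b))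
      (finSumFinEquiv.symm j))
    (fun j => Sum.elim (fun a => Sum.inl (Sum.inr a)) (fun b => Sum.inr (Sum.inr b))
      (finSumFinEquiv.symm j))

/-- The tensor product `p ⊗ q ∈ P_{k+l}`: a diagram of `p` placed to the left of
a diagram of `q`. -/
def tensor {k l : ℕ} (p : Pk k) (q : Pk l) : Pk (k + l) :=
  Setoid.comap (reindex k l) (sumSetoid p q)

/-- The `≺`-defect `η(p,q)`. -/
def eta {k : ℕ} (p q : Pk k) : ℚ :=
  pdist (idk k) p + pdist (idk k) q - pdist (idk k) (comp p q)
    - ((k : ℚ) + (nc (comp p q) : ℚ) - (nc p : ℚ) - (nc q : ℚ)) / 2 - (kappaP p q : ℚ)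

/-- The Kreweras complement of `p'` in `p`: the set of `p''` with `p = p' ∘ p''`
realizing equality in the `≺`-defect inequality. -/
def Krew {k : ℕ} (p p' : Pk k) : Set (Pk k) :=
  {p'' | comp p' p'' = p ∧ eta p' p'' = 0}

/-- `p' ≺ p` : `p'` is an admissible prefix of `p`. -/
def prec {k : ℕ} (p' p : Pk k) : Prop :=
  ∃ p'', comp p' p'' = p ∧ eta p' p'' = 0

/-- The partition of `{1,…,k}` into the orbits (cycles) of the permutation `σ`. -/
def cycleSetoid {k : ℕ} (σ : Equiv.Perm (Fin k)) : Setoid (Fin k) :=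
  ⟨σ.SameCycle,
    ⟨fun x => Equiv.Perm.SameCycle.refl σ x, fun h => h.symm, fun h₁ h₂ => h₁.trans h₂⟩⟩

/-- A partition of `{1,…,k}` is non-crossing if there are no `a < b < c < d` with
`a, c` in one block and `b, d` in a different block. -/
def NonCrossing {k : ℕ} (π : Setoid (Fin k)) : Prop :=
  ¬ ∃ a b c d : Fin k, a < b ∧ b < c ∧ c < d ∧ π.r a c ∧ π.r b d ∧ ¬ π.r a b

/-- The map sending a permutation partition to the partition of `{1,…,k}` into
the orbits of the corresponding bijection (the blocks of `p ⊔ id_k` restricted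
to the top row). -/
def orbitMap {k : ℕ} (p : Pk k) : Setoid (Fin k) :=
  Setoid.comap (Sum.inl : Fin k → Fin k ⊕ Fin k) (p ⊔ idk k)

/-- The permutation `(1,k+1)(2,k+2)⋯(k,2k)` of `{1,…,2k}`. -/
def tauPerm (k : ℕ) : Equiv.Perm (Fin (k + k)) :=
  (finSumFinEquiv.symm.trans (Equiv.sumComm (Fin k) (Fin k))).trans finSumFinEquiv

/-- The left part of a partition in `P_{k₁+k₂}`. -/
def leftPart {k₁ k₂ : ℕ} (p : Pk (k₁ + k₂)) : Pk k₁ :=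
  Setoid.comap (Sum.map (Fin.castAdd k₂) (Fin.castAdd k₂)) p

/-- The right part of a partition in `P_{k₁+k₂}`. -/
def rightPart {k₁ k₂ : ℕ} (p : Pk (k₁ + k₂)) : Pk k₂ :=
  Setoid.comap (Sum.map (Fin.natAdd k₁) (Fin.natAdd k₁)) p

/-- The `p`-moment `m_p(E_N) = Tr_N(E_N ᵗp)/N^{nc(p ⊔ id_k)}
`= ∑_{p'} (E_N)_{p'} N^{nc(p ⊔ p') - nc(p ⊔ id_k)}`. -/
def momentF {k : ℕ} (E : ℕ → Pk k → ℂ) (p : Pk k) (N : ℕ) : ℂ :=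
  ∑ᶠ p' : Pk k, E N p' * (N : ℂ) ^ ((nc (p ⊔ p') : ℤ) - (nc (p ⊔ idk k) : ℤ))

/-- The `p`-cumulant `κ_p(E_N) = N^{nc p - nc (p ⊔ id_k)} (E_N)_p`. -/
def cumulantF {k : ℕ} (E : ℕ → Pk k → ℂ) (p : Pk k) (N : ℕ) : ℂ :=
  (N : ℂ) ^ ((nc p : ℤ) - (nc (p ⊔ idk k) : ℤ)) * E N p

section AuxStatement13

variable {α β : Type*}

/-- The setoid generated by identifying `u` and `v`. -/
def pairS (u v : α) : Setoid α :=
  ⟨fun a b => a = b ∨ ((a = u ∨ a = v) ∧ (b = u ∨ b = v)), by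
    refine ⟨fun a => Or.inl rfl, ?_, ?_⟩
    · rintro a b (rfl | ⟨h1, h2⟩)
      · exact Or.inl rfl
      · exact Or.inr ⟨h2, h1⟩
    · rintro a b c (rfl | ⟨h1, h2⟩) hbc
      · exact hbc
      · rcases hbc with rfl | ⟨h3, h4⟩
        · exact Or.inr ⟨h1, h2⟩
        · exact Or.inr ⟨h1, h4⟩⟩

lemma rel_sup_left {r s : Setoid α} {x y : α} (h : r x y) : (r ⊔ s) x y :=
  (le_sup_left : r ≤ r ⊔ s) h

lemma rel_sup_right {r s : Setoid α} {x y : α} (h : s x y) : (r ⊔ s) x y :=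
  (le_sup_right : s ≤ r ⊔ s) h

lemma pairS_rel_uv (u v : α) : pairS u v u v := Or.inr ⟨Or.inl rfl, Or.inr rfl⟩

lemma pairS_le {w : Setoid α} {u v : α} (h : w u v) : pairS u v ≤ w := by
  have key : ∀ x, (x = u ∨ x = v) → w x u := by
    rintro x (rfl | rfl)
    · exact w.refl' x
    · exact w.symm' h
  rintro a b (rfl | ⟨h1, h2⟩)
  · exact w.refl' a
  · exact w.trans' (key a h1) (w.symm' (key b h2))

lemma nc_le_of_le [Finite α] {r s : Setoid α} (h : r ≤ s) : nc s ≤ nc r := by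
  have hs : Function.Surjective
      (Quotient.map' (id : α → α) (fun a b hab => h hab) : Quotient r → Quotient s) := by
    intro q
    obtain ⟨a, rfl⟩ := Quotient.exists_rep q
    exact ⟨Quotient.mk r a, rfl⟩
  exact Nat.card_le_card_of_surjective _ hs

lemma eq_of_le_of_nc_eq [Finite α] {r s : Setoid α} (h : r ≤ s) (hc : nc r = nc s) : r = s := by
  set f : Quotient r → Quotient s := Quotient.map' (id : α → α) (fun a b hab => h hab) with hf
  have hsurj : Function.Surjective f := by
    intro q
    obtain ⟨a, rfl⟩ := Quotient.exists_rep q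
    exact ⟨Quotient.mk r a, rfl⟩
  have hbij : Function.Bijective f :=
    (Nat.bijective_iff_surjective_and_card f).mpr ⟨hsurj, hc⟩
  refine le_antisymm h ?_
  intro a b hab
  have h2 : f (Quotient.mk r a) = f (Quotient.mk r b) := by
    show Quotient.mk s a = Quotient.mk s b
    exact Quotient.sound hab
  exact Quotient.exact (hbij.injective h2)

/-- Gluing along a new pair, realized as a kernel. -/
lemma sup_pair_eq_ker {z : Setoid α} (u v : α) :
    z ⊔ pairS u v =
      Setoid.ker (fun w => if z w v then Quotient.mk z u else Quotient.mk z w) := by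
  set f : α → Quotient z := fun w => if z w v then Quotient.mk z u else Quotient.mk z w with hf
  apply le_antisymm
  · apply sup_le
    · intro a b hab
      show f a = f b
      have hiff : z a v ↔ z b v := ⟨fun h => z.trans' (z.symm' hab) h, fun h => z.trans' hab h⟩
      by_cases ha : z a v
      · simp [hf, ha, hiff.mp ha]
      · have hb : ¬ z b v := fun h => ha (hiff.mpr h)
        simp only [hf, if_neg ha, if_neg hb]
        exact Quotient.sound hab
    · intro a b hab
      show f a = f b
      have key : f u = f v := by
        have hv : z v v := z.refl' v
        by_cases hu : z u v <;> simp [hf, hu, hv]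
      have key2 : ∀ w', (w' = u ∨ w' = v) → f w' = f u := by
        rintro w' (rfl | rfl)
        · rfl
        · exact key.symm
      rcases hab with rfl | ⟨h1, h2⟩
      · rfl
      · rw [key2 a h1, key2 b h2]
  · intro a b hab
    have hab' : f a = f b := hab
    set t := z ⊔ pairS u v with ht
    by_cases ha : z a v <;> by_cases hb : z b v <;>
      simp only [hf, if_pos, if_neg, ha, hb, ite_true, ite_false] at hab'
    · exact rel_sup_left (z.trans' ha (z.symm' hb))
    · have h1 : z u b := Quotient.exact hab'
      have t1 : t a v := rel_sup_left ha
      have t2 : t v u := rel_sup_right (Or.inr ⟨Or.inr rfl, Or.inl rfl⟩)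
      have t3 : t u b := rel_sup_left h1
      exact t.trans' (t.trans' t1 t2) t3
    · have h1 : z a u := Quotient.exact hab'
      have t1 : t a u := rel_sup_left h1
      have t2 : t u v := rel_sup_right (pairS_rel_uv u v)
      have t3 : t v b := rel_sup_left (z.symm' hb)
      exact t.trans' (t.trans' t1 t2) t3
    · exact rel_sup_left (Quotient.exact hab')

lemma nc_sup_pair [Finite α] {z : Setoid α} {u v : α} (h : ¬ z u v) :
    nc (z ⊔ pairS u v) + 1 = nc z := by
  classical
  set f : α → Quotient z := fun w => if z w v then Quotient.mk z u else Quotient.mk z w with hf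
  have hker : z ⊔ pairS u v = Setoid.ker f := sup_pair_eq_ker u v
  have hrange : Set.range f = {Quotient.mk z v}ᶜ := by
    ext q
    constructor
    · rintro ⟨w, rfl⟩
      by_cases hw : z w v
      · simp only [hf, if_pos hw, Set.mem_compl_iff, Set.mem_singleton_iff]
        intro hc
        exact h (Quotient.exact hc)
      · simp only [hf, if_neg hw, Set.mem_compl_iff, Set.mem_singleton_iff]
        intro hc
        exact hw (Quotient.exact hc)
    · intro hq
      obtain ⟨w, rfl⟩ := Quotient.exists_rep q
      refine ⟨w, ?_⟩
      have hw : ¬ z w v := by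
        intro hc
        exact hq (Set.mem_singleton_iff.mpr (Quotient.sound hc))
      simp [hf, hw]
  have e1 : Quotient (z ⊔ pairS u v) ≃ Set.range f := by
    rw [hker]; exact Setoid.quotientKerEquivRange f
  have hcard : nc (z ⊔ pairS u v) = Nat.card ({Quotient.mk z v}ᶜ : Set (Quotient z)) := by
    rw [nc, Nat.card_congr e1, hrange]
  rw [hcard]
  have h2 : Nat.card ({Quotient.mk z v}ᶜ : Set (Quotient z)) + 1 = Nat.card (Quotient z) := by
    rw [Nat.card_coe_set_eq]
    have := Set.ncard_add_ncard_compl ({Quotient.mk z v} : Set (Quotient z))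
    rw [Set.ncard_singleton] at this
    omega
  rw [h2]; rfl

lemma nc_sup_pair_cases [Finite α] (z : Setoid α) (u v : α) :
    nc (z ⊔ pairS u v) = nc z ∨ nc (z ⊔ pairS u v) + 1 = nc z := by
  by_cases h : z u v
  · left; rw [sup_eq_left.mpr (pairS_le h)]
  · right; exact nc_sup_pair h

lemma exists_new_pair {x m : Setoid α} (hle : x ≤ m) (hne : x ≠ m) :
    ∃ u v, m u v ∧ ¬ x u v := by
  by_contra hc
  push_neg at hc
  exact hne (le_antisymm hle fun a b hab => hc a b hab)

/-- Up-phase inequality: submodularity along a gluing chain. -/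
lemma lemU [Finite α] (a : Setoid α) :
    ∀ n (x m : Setoid α), nc x ≤ n → x ≤ m →
      nc (a ⊔ x) + nc m ≤ nc x + nc (a ⊔ m) := by
  intro n
  induction n with
  | zero =>
    intro x m hn hle
    by_cases hxm : x = m
    · subst hxm; omega
    · obtain ⟨u, v, hm, hx⟩ := exists_new_pair hle hxm
      have h1 := nc_sup_pair hx
      omega
  | succ n ih =>
    intro x m hn hle
    by_cases hxm : x = m
    · subst hxm; omega
    · obtain ⟨u, v, hm, hx⟩ := exists_new_pair hle hxm
      have h1 : nc (x ⊔ pairS u v) + 1 = nc x := nc_sup_pair hx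
      have hx'm : x ⊔ pairS u v ≤ m := sup_le hle (pairS_le hm)
      have ih' := ih (x ⊔ pairS u v) m (by omega) hx'm
      have h2 : a ⊔ (x ⊔ pairS u v) = (a ⊔ x) ⊔ pairS u v := by rw [sup_assoc]
      have h3 := nc_sup_pair_cases (a ⊔ x) u v
      rw [← h2] at h3
      omega

/-- Down-phase inequality: `s`-joins are dominated by `a`-joins along a gluing chain. -/
lemma lemD [Finite α] {a s : Setoid α} (has : a ≤ s) :
    ∀ n (c m : Setoid α), nc c ≤ n → c ≤ m →
      nc (a ⊔ m) + nc (s ⊔ c) ≤ nc (a ⊔ c) + nc (s ⊔ m) := by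
  intro n
  induction n with
  | zero =>
    intro c m hn hle
    by_cases hcm : c = m
    · subst hcm; omega
    · obtain ⟨u, v, hm, hc⟩ := exists_new_pair hle hcm
      have h1 := nc_sup_pair hc
      omega
  | succ n ih =>
    intro c m hn hle
    by_cases hcm : c = m
    · subst hcm; omega
    · obtain ⟨u, v, hm, hc⟩ := exists_new_pair hle hcm
      have h1 : nc (c ⊔ pairS u v) + 1 = nc c := nc_sup_pair hc
      have hc'm : c ⊔ pairS u v ≤ m := sup_le hle (pairS_le hm)
      have ih' := ih (c ⊔ pairS u v) m (by omega) hc'm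
      have ha' : a ⊔ (c ⊔ pairS u v) = (a ⊔ c) ⊔ pairS u v := by rw [sup_assoc]
      have hs' : s ⊔ (c ⊔ pairS u v) = (s ⊔ c) ⊔ pairS u v := by rw [sup_assoc]
      by_cases hac : (a ⊔ c) u v
      · have hsc : (s ⊔ c) u v := sup_le_sup_right has c hac
        have e1 : a ⊔ (c ⊔ pairS u v) = a ⊔ c := by rw [ha', sup_eq_left.mpr (pairS_le hac)]
        have e2 : s ⊔ (c ⊔ pairS u v) = s ⊔ c := by rw [hs', sup_eq_left.mpr (pairS_le hsc)]
        rw [e1, e2] at ih'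
        omega
      · have h2 : nc (a ⊔ (c ⊔ pairS u v)) + 1 = nc (a ⊔ c) := by
          rw [ha']; exact nc_sup_pair hac
        have h3 := nc_sup_pair_cases (s ⊔ c) u v
        rw [← hs'] at h3
        omega

/-- The main inequality: the geodesic defect of `x` between `a` and `c` is at least
`nc s - nc (s ⊔ x)` whenever `a, c ≤ s`. -/
lemma main_ineq [Finite α] {a c s : Setoid α} (x : Setoid α) (has : a ≤ s) (hcs : c ≤ s) :
    nc (a ⊔ x) + nc (x ⊔ c) + nc s ≤ nc x + nc (a ⊔ c) + nc (s ⊔ x) := by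
  have hU := lemU a (nc x) x (x ⊔ c) le_rfl le_sup_left
  have hD := lemD has (nc c) c (x ⊔ c) le_rfl le_sup_right
  have h1 : s ⊔ c = s := sup_eq_left.mpr hcs
  have h2 : s ⊔ (x ⊔ c) = s ⊔ x := by
    rw [← sup_assoc, sup_comm s x, sup_assoc, h1]
  rw [h1, h2] at hD
  omega

lemma triangle_ineq [Finite α] (a c x : Setoid α) :
    nc (a ⊔ x) + nc (x ⊔ c) ≤ nc x + nc (a ⊔ c) := by
  have := main_ineq (a := a) (c := c) (s := ⊤) x le_top le_top
  rw [top_sup_eq] at this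
  omega

/-- `geoLE` as an equation between natural numbers. -/
lemma geoLE_iff_nc {b x c : Setoid α} :
    geoLE b x c ↔ nc x + nc (b ⊔ c) = nc (b ⊔ x) + nc (x ⊔ c) := by
  unfold geoLE pdist
  constructor
  · intro h
    have h2 : (nc x : ℚ) + (nc (b ⊔ c) : ℚ) = (nc (b ⊔ x) : ℚ) + (nc (x ⊔ c) : ℚ) := by
      linarith
    exact_mod_cast h2
  · intro h
    have h2 : (nc x : ℚ) + (nc (b ⊔ c) : ℚ) = (nc (b ⊔ x) : ℚ) + (nc (x ⊔ c) : ℚ) := by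
      exact_mod_cast h
    linarith

/-! ### Sum setoids -/

lemma sumSetoid_rel_inl_inl {p : Setoid α} {q : Setoid β} {a b : α} :
    sumSetoid p q (Sum.inl a) (Sum.inl b) ↔ p a b := by
  show Sum.map (Quotient.mk p) (Quotient.mk q) (Sum.inl a)
      = Sum.map (Quotient.mk p) (Quotient.mk q) (Sum.inl b) ↔ p a b
  simp only [Sum.map_inl, Sum.inl.injEq]
  exact ⟨Quotient.exact, Quotient.sound⟩

lemma sumSetoid_rel_inr_inr {p : Setoid α} {q : Setoid β} {a b : β} :
    sumSetoid p q (Sum.inr a) (Sum.inr b) ↔ q a b := by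
  show Sum.map (Quotient.mk p) (Quotient.mk q) (Sum.inr a)
      = Sum.map (Quotient.mk p) (Quotient.mk q) (Sum.inr b) ↔ q a b
  simp only [Sum.map_inr, Sum.inr.injEq]
  exact ⟨Quotient.exact, Quotient.sound⟩

lemma sumSetoid_rel_inl_inr {p : Setoid α} {q : Setoid β} {a : α} {b : β} :
    ¬ sumSetoid p q (Sum.inl a) (Sum.inr b) := by
  intro h
  have h' : Sum.map (Quotient.mk p) (Quotient.mk q) (Sum.inl a)
      = Sum.map (Quotient.mk p) (Quotient.mk q) (Sum.inr b) := h
  simp at h'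

lemma sumSetoid_rel_inr_inl {p : Setoid α} {q : Setoid β} {a : β} {b : α} :
    ¬ sumSetoid p q (Sum.inr a) (Sum.inl b) := by
  intro h
  have h' : Sum.map (Quotient.mk p) (Quotient.mk q) (Sum.inr a)
      = Sum.map (Quotient.mk p) (Quotient.mk q) (Sum.inl b) := h
  simp at h'

lemma comap_inl_sumSetoid (p : Setoid α) (q : Setoid β) :
    Setoid.comap Sum.inl (sumSetoid p q) = p :=
  Setoid.ext fun _ _ => sumSetoid_rel_inl_inl

lemma comap_inr_sumSetoid (p : Setoid α) (q : Setoid β) :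
    Setoid.comap Sum.inr (sumSetoid p q) = q :=
  Setoid.ext fun _ _ => sumSetoid_rel_inr_inr

lemma comap_mono {γ : Type*} {f : γ → α} {r t : Setoid α} (h : r ≤ t) :
    Setoid.comap f r ≤ Setoid.comap f t := fun _ _ hxy => h hxy

lemma sumSetoid_le_iff {p : Setoid α} {q : Setoid β} {t : Setoid (α ⊕ β)} :
    sumSetoid p q ≤ t ↔ p ≤ Setoid.comap Sum.inl t ∧ q ≤ Setoid.comap Sum.inr t := by
  constructor
  · intro h
    exact ⟨fun a b hab => h (sumSetoid_rel_inl_inl.mpr hab),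
      fun a b hab => h (sumSetoid_rel_inr_inr.mpr hab)⟩
  · rintro ⟨h1, h2⟩ x y hxy
    match x, y with
    | Sum.inl a, Sum.inl b => exact h1 (sumSetoid_rel_inl_inl.mp hxy)
    | Sum.inl a, Sum.inr b => exact absurd hxy sumSetoid_rel_inl_inr
    | Sum.inr a, Sum.inl b => exact absurd hxy sumSetoid_rel_inr_inl
    | Sum.inr a, Sum.inr b => exact h2 (sumSetoid_rel_inr_inr.mp hxy)

lemma sumSetoid_mono {p p' : Setoid α} {q q' : Setoid β} (h1 : p ≤ p') (h2 : q ≤ q') :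
    sumSetoid p q ≤ sumSetoid p' q' := by
  rw [sumSetoid_le_iff, comap_inl_sumSetoid, comap_inr_sumSetoid]
  exact ⟨h1, h2⟩

lemma sumSetoid_sup {p p' : Setoid α} {q q' : Setoid β} :
    sumSetoid (p ⊔ p') (q ⊔ q') = sumSetoid p q ⊔ sumSetoid p' q' := by
  apply le_antisymm
  · rw [sumSetoid_le_iff]
    constructor
    · apply sup_le
      · exact le_trans (le_of_eq (comap_inl_sumSetoid p q).symm) (comap_mono le_sup_left)
      · exact le_trans (le_of_eq (comap_inl_sumSetoid p' q').symm) (comap_mono le_sup_right)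
    · apply sup_le
      · exact le_trans (le_of_eq (comap_inr_sumSetoid p q).symm) (comap_mono le_sup_left)
      · exact le_trans (le_of_eq (comap_inr_sumSetoid p' q').symm) (comap_mono le_sup_right)
  · exact sup_le (sumSetoid_mono le_sup_left le_sup_left)
      (sumSetoid_mono le_sup_right le_sup_right)

lemma nc_sumSetoid [Finite α] [Finite β] (p : Setoid α) (q : Setoid β) :
    nc (sumSetoid p q) = nc p + nc q := by
  have hs : Function.Surjective (Sum.map (Quotient.mk p) (Quotient.mk q)) :=
    Sum.map_surjective.mpr ⟨fun x => Quotient.exists_rep x, fun x => Quotient.exists_rep x⟩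
  have e := Setoid.quotientKerEquivOfSurjective _ hs
  rw [nc, sumSetoid, Nat.card_congr e, Nat.card_sum]
  rfl

lemma eq_sumSetoid_of_le_sides {t : Setoid (α ⊕ β)}
    (h : t ≤ sumSetoid (⊤ : Setoid α) (⊤ : Setoid β)) :
    t = sumSetoid (Setoid.comap Sum.inl t) (Setoid.comap Sum.inr t) := by
  apply Setoid.ext
  intro x y
  match x, y with
  | Sum.inl a, Sum.inl b =>
    exact (sumSetoid_rel_inl_inl (p := Setoid.comap Sum.inl t) (q := Setoid.comap Sum.inr t)
      (a := a) (b := b)).symm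
  | Sum.inl a, Sum.inr b =>
    constructor
    · intro hxy
      exact absurd (h hxy) sumSetoid_rel_inl_inr
    · intro hxy
      exact absurd hxy sumSetoid_rel_inl_inr
  | Sum.inr a, Sum.inl b =>
    constructor
    · intro hxy
      exact absurd (h hxy) sumSetoid_rel_inr_inl
    · intro hxy
      exact absurd hxy sumSetoid_rel_inr_inl
  | Sum.inr a, Sum.inr b =>
    exact (sumSetoid_rel_inr_inr (p := Setoid.comap Sum.inl t) (q := Setoid.comap Sum.inr t)
      (a := a) (b := b)).symm

/-! ### Transport along an equivalence -/

lemma comap_equiv_sup (e : α ≃ β) (r t : Setoid β) :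
    Setoid.comap ⇑e (r ⊔ t) = Setoid.comap ⇑e r ⊔ Setoid.comap ⇑e t := by
  apply le_antisymm
  · intro x y hxy
    have key : ∀ u v : β, (r ⊔ t) u v →
        (Setoid.comap ⇑e r ⊔ Setoid.comap ⇑e t) (e.symm u) (e.symm v) := by
      intro u v h
      rw [Setoid.sup_eq_eqvGen] at h
      induction h with
      | rel a b hab =>
        rcases hab with hab | hab
        · exact rel_sup_left (show r (e (e.symm a)) (e (e.symm b)) by
            simpa using hab)
        · exact rel_sup_right (show t (e (e.symm a)) (e (e.symm b)) by
            simpa using hab)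
      | refl a => exact (Setoid.comap ⇑e r ⊔ Setoid.comap ⇑e t).refl' _
      | symm a b _ ih => exact (Setoid.comap ⇑e r ⊔ Setoid.comap ⇑e t).symm' ih
      | trans a b c _ _ ih1 ih2 =>
        exact (Setoid.comap ⇑e r ⊔ Setoid.comap ⇑e t).trans' ih1 ih2
    have := key (e x) (e y) hxy
    simpa using this
  · exact sup_le (comap_mono le_sup_left) (comap_mono le_sup_right)

lemma nc_comap_equiv [Finite α] (e : α ≃ β) (r : Setoid β) :
    nc (Setoid.comap ⇑e r) = nc r := by
  have hcomap : Setoid.comap ⇑e r = Setoid.ker (Quotient.mk r ∘ ⇑e) := by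
    apply Setoid.ext
    intro x y
    show r (e x) (e y) ↔ Quotient.mk r (e x) = Quotient.mk r (e y)
    exact ⟨Quotient.sound, Quotient.exact⟩
  have hsurj : Function.Surjective (Quotient.mk r ∘ ⇑e) :=
    Function.Surjective.comp (fun x => Quotient.exists_rep x) e.surjective
  rw [nc, hcomap, Nat.card_congr (Setoid.quotientKerEquivOfSurjective _ hsurj)]
  rfl

lemma comap_comap_symm (e : α ≃ β) (r : Setoid α) :
    Setoid.comap ⇑e (Setoid.comap ⇑e.symm r) = r := by
  apply Setoid.ext
  intro x y
  show r (e.symm (e x)) (e.symm (e y)) ↔ r x y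
  simp

end AuxStatement13

section Aux2Statement13

/-- The reindexing map as an equivalence. -/
def reindexEquiv (k l : ℕ) :
    (Fin (k + l) ⊕ Fin (k + l)) ≃ ((Fin k ⊕ Fin k) ⊕ (Fin l ⊕ Fin l)) where
  toFun := reindex k l
  invFun := Sum.elim
    (Sum.elim (fun a => Sum.inl (finSumFinEquiv (Sum.inl a)))
              (fun a => Sum.inr (finSumFinEquiv (Sum.inl a))))
    (Sum.elim (fun b => Sum.inl (finSumFinEquiv (Sum.inr b)))
              (fun b => Sum.inr (finSumFinEquiv (Sum.inr b))))
  left_inv := by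
    rintro (j | j) <;>
    · rcases h : finSumFinEquiv.symm j with a | b <;>
        [skip; skip] <;>
        (have h2 := congrArg finSumFinEquiv h
         rw [Equiv.apply_symm_apply] at h2
         simp [reindex, h, h2])
  right_inv := by
    rintro ((a | b) | (a | b)) <;> simp [reindex]

lemma reindexEquiv_coe (k l : ℕ) : ⇑(reindexEquiv k l) = reindex k l := rfl

lemma tensor_eq_comap {k l : ℕ} (p : Pk k) (q : Pk l) :
    tensor p q = Setoid.comap ⇑(reindexEquiv k l) (sumSetoid p q) := rfl

lemma idk_rel {k : ℕ} {x y : Fin k ⊕ Fin k} :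
    idk k x y ↔ Sum.elim id id x = Sum.elim id id y := Iff.rfl

lemma idk_tensor (k l : ℕ) : idk (k + l) = tensor (idk k) (idk l) := by
  apply Setoid.ext
  intro x y
  show idk (k + l) x y ↔ sumSetoid (idk k) (idk l) (reindex k l x) (reindex k l y)
  obtain ⟨x, rfl⟩ | ⟨x, rfl⟩ : (∃ j, x = Sum.inl j) ∨ (∃ j, x = Sum.inr j) := by
    cases x with
    | inl j => exact Or.inl ⟨j, rfl⟩
    | inr j => exact Or.inr ⟨j, rfl⟩
  all_goals
  obtain ⟨y, rfl⟩ | ⟨y, rfl⟩ : (∃ j, y = Sum.inl j) ∨ (∃ j, y = Sum.inr j) := by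
    cases y with
    | inl j => exact Or.inl ⟨j, rfl⟩
    | inr j => exact Or.inr ⟨j, rfl⟩
  all_goals
    obtain ⟨x', rfl⟩ := finSumFinEquiv.surjective x
  all_goals
    obtain ⟨y', rfl⟩ := finSumFinEquiv.surjective y
  all_goals
    rcases x' with a | a <;> rcases y' with b | b <;>
      simp [idk_rel, tensor_eq_comap, reindexEquiv_coe, Setoid.comap_rel, reindex,
        sumSetoid_rel_inl_inl, sumSetoid_rel_inr_inr,
        sumSetoid_rel_inl_inr, sumSetoid_rel_inr_inl,
        idk, Setoid.ker_def, Fin.ext_iff] <;>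
      try (have ha := a.isLt; have hb := b.isLt; omega)
end Aux2Statement13

/-- Geodesics factorize through tensor products: if
`p' ≤ p₁ ⊗ p₂` (geodesic order with base `id_{k+l}`), then `p' = p'₁ ⊗ p'₂` with
`p'₁ ≤ p₁` and `p'₂ ≤ p₂`. -/
theorem statement13 (k l : ℕ) (hk : 0 < k) (hl : 0 < l) (p₁ : Pk k) (p₂ : Pk l)
    (p' : Pk (k + l)) (h : geoLE (idk (k + l)) p' (tensor p₁ p₂)) :
    ∃ (q₁ : Pk k) (q₂ : Pk l),
      geoLE (idk k) q₁ p₁ ∧ geoLE (idk l) q₂ p₂ ∧ p' = tensor q₁ q₂ := by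
  classical
  obtain ⟨P', rfl⟩ : ∃ P'', p' = Setoid.comap ⇑(reindexEquiv k l) P'' :=
    ⟨Setoid.comap ⇑(reindexEquiv k l).symm p', (comap_comap_symm (reindexEquiv k l) p').symm⟩
  have hid : idk (k + l) = Setoid.comap ⇑(reindexEquiv k l) (sumSetoid (idk k) (idk l)) :=
    idk_tensor k l
  have htens : tensor p₁ p₂ = Setoid.comap ⇑(reindexEquiv k l) (sumSetoid p₁ p₂) := rfl
  have h0 := geoLE_iff_nc.mp h
  rw [hid, htens, ← comap_equiv_sup, ← comap_equiv_sup, ← comap_equiv_sup,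
    nc_comap_equiv, nc_comap_equiv, nc_comap_equiv, nc_comap_equiv] at h0
  -- h0 : nc P' + nc (B ⊔ P) = nc (B ⊔ P') + nc (P' ⊔ P)
  have hmain := main_ineq (a := sumSetoid (idk k) (idk l)) (c := sumSetoid p₁ p₂)
      (s := sumSetoid (⊤ : Setoid (Fin k ⊕ Fin k)) (⊤ : Setoid (Fin l ⊕ Fin l))) P'
      (sumSetoid_mono le_top le_top) (sumSetoid_mono le_top le_top)
  have hanti : nc (sumSetoid (⊤ : Setoid (Fin k ⊕ Fin k)) (⊤ : Setoid (Fin l ⊕ Fin l)) ⊔ P')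
      ≤ nc (sumSetoid (⊤ : Setoid (Fin k ⊕ Fin k)) (⊤ : Setoid (Fin l ⊕ Fin l))) :=
    nc_le_of_le le_sup_left
  have hSeq : sumSetoid (⊤ : Setoid (Fin k ⊕ Fin k)) (⊤ : Setoid (Fin l ⊕ Fin l))
      = sumSetoid (⊤ : Setoid (Fin k ⊕ Fin k)) (⊤ : Setoid (Fin l ⊕ Fin l)) ⊔ P' :=
    eq_of_le_of_nc_eq le_sup_left (by omega)
  have hP'S : P' ≤ sumSetoid (⊤ : Setoid (Fin k ⊕ Fin k)) (⊤ : Setoid (Fin l ⊕ Fin l)) :=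
    le_sup_right.trans_eq hSeq.symm
  have hsplit : P' = sumSetoid (Setoid.comap Sum.inl P') (Setoid.comap Sum.inr P') :=
    eq_sumSetoid_of_le_sides hP'S
  rw [hsplit, ← sumSetoid_sup, ← sumSetoid_sup, ← sumSetoid_sup, nc_sumSetoid, nc_sumSetoid,
    nc_sumSetoid, nc_sumSetoid] at h0
  have tri1 := triangle_ineq (idk k) p₁ (Setoid.comap Sum.inl P')
  have tri2 := triangle_ineq (idk l) p₂ (Setoid.comap Sum.inr P')
  refine ⟨Setoid.comap Sum.inl P', Setoid.comap Sum.inr P',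
    geoLE_iff_nc.mpr (by omega), geoLE_iff_nc.mpr (by omega), ?_⟩
  conv_lhs => rw [hsplit]
  rfl


end PartitionPaper
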